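/- Let R be a commutative Noetherian ring, Φ a system of ideals of R, M an arbitrary R-module, and t a non-negative integer. Then ⋃_{i<t} Supp_R(H^i_Φ(M)) = ⋃_{𝔞∈Φ, i<t} Supp_R(H^i_𝔞(M)). -/

import Mathlib

open CategoryTheory CategoryTheory.Limits Opposite

noncomputable section

section Preliminaries

variable {R : Type} [CommRing R]

/-- A *system of ideals* of `R`: a nonempty set of ideals `Φ` such that for all
`a, b ∈ Φ` there is `c ∈ Φ` with `c ⊆ a * b`. -/
def Ideal.IsSystem (Φ : Set (Ideal R)) : Prop :=
  Φ.Nonempty ∧ ∀ a ∈ Φ, ∀ b ∈ Φ, ∃ c ∈ Φ, c ≤ a * b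

/-- The `Φ`-torsion submodule `Γ_Φ(M)`; for a system of ideals `Φ` it is
`{x ∈ M | a • x = 0 for some a ∈ Φ}`. -/
def phiTorsion (Φ : Set (Ideal R)) (M : ModuleCat.{0} R) : Submodule R M :=
  ⨆ a ∈ Φ, Submodule.torsionBySet R M (a : Set R)

lemma phiTorsion_le_comap (Φ : Set (Ideal R)) {M N : ModuleCat.{0} R} (f : M ⟶ N) :
    phiTorsion Φ M ≤ (phiTorsion Φ N).comap f.hom := by
  refine iSup₂_le fun a ha => le_trans ?_ (Submodule.comap_mono
    (le_iSup₂ (f := fun (a : Ideal R) (_ : a ∈ Φ) => Submodule.torsionBySet R N (a : Set R)) a ha))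
  intro x hx
  rw [Submodule.mem_torsionBySet_iff] at hx
  rw [Submodule.mem_comap, Submodule.mem_torsionBySet_iff]
  intro r
  have h : f.hom ((r : R) • x) = (r : R) • f.hom x := map_smul f.hom (r : R) x
  rw [hx r, map_zero] at h
  exact h.symm

/-- The `Φ`-torsion functor `Γ_Φ(-)`. -/
def phiTorsionFunctor (Φ : Set (Ideal R)) : ModuleCat.{0} R ⥤ ModuleCat.{0} R where
  obj M := ModuleCat.of R (phiTorsion Φ M)
  map {M N} f := ModuleCat.ofHom (LinearMap.restrict f.hom (fun x hx => phiTorsion_le_comap Φ f hx))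
  map_id M := by ext x; rfl
  map_comp f g := by ext x; rfl

instance (Φ : Set (Ideal R)) : (phiTorsionFunctor Φ).Additive where
  map_add := by intros; ext x; rfl

/-- General local cohomology `H^i_Φ(-)`: the `i`-th right derived functor of `Γ_Φ(-)`. -/
def glc (Φ : Set (Ideal R)) (i : ℕ) : ModuleCat.{0} R ⥤ ModuleCat.{0} R :=
  (phiTorsionFunctor Φ).rightDerived i

/-- Ordinary local cohomology `H^i_a(-)`: the `i`-th right derived functor of the
`a`-torsion functor `Γ_a(-) = Γ_Φ(-)` where `Φ = {a^n : n ∈ ℕ}`. -/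
def olc (a : Ideal R) (i : ℕ) : ModuleCat.{0} R ⥤ ModuleCat.{0} R :=
  glc {I : Ideal R | ∃ n : ℕ, I = a ^ n} i

/-- `Ext^n_R(N, M)` as an `R`-module. -/
def extM (n : ℕ) (N M : ModuleCat.{0} R) : ModuleCat.{0} R :=
  ((Ext R (ModuleCat.{0} R) n).obj (op N)).obj M

/-- A Serre subcategory of the category of `R`-modules, given by the class of its
objects: for every short exact sequence `0 → X₁ → X₂ → X₃ → 0`, `X₂` belongs to
the class iff both `X₁` and `X₃` do. -/
structure SerreClass (R : Type) [CommRing R] : Type 1 where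
  mem : ModuleCat.{0} R → Prop
  shortExact_iff : ∀ {S : ShortComplex (ModuleCat.{0} R)}, S.ShortExact →
    (mem S.X₂ ↔ mem S.X₁ ∧ mem S.X₃)

/-- `X` is an `a`-torsion module: every element is annihilated by some power of `a`. -/
def IsIdealTorsion (a : Ideal R) (X : ModuleCat.{0} R) : Prop :=
  ∀ x : X, ∃ n : ℕ, ∀ r ∈ a ^ n, r • x = 0

/-- A Serre class is a *Melkersson subcategory* with respect to `a` if for every
`a`-torsion module `X`, `(0 :_X a) ∈ S` implies `X ∈ S`. -/
def SerreClass.IsMelkersson (S : SerreClass R) (a : Ideal R) : Prop :=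
  ∀ X : ModuleCat.{0} R, IsIdealTorsion a X →
    S.mem (ModuleCat.of R (Submodule.torsionBySet R X (a : Set R))) → S.mem X

/-- The dimension of a module: the Krull dimension of its support
(so it equals `⊥ = -1` exactly for the zero module). -/
def moduleDim (R : Type) [CommRing R] (M : Type) [AddCommGroup M] [Module R M] :
    WithBot ℕ∞ :=
  Order.krullDim (Module.support R M)

/-- Interpret an integer `k ≥ -1` as an element of `{-1, 0, 1, ...} ∪ {∞}`. -/
def intDim (k : ℤ) : WithBot ℕ∞ := if k < 0 then ⊥ else ((k.toNat : ℕ∞) : WithBot ℕ∞)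

end Preliminaries

section Aux

variable {R : Type} [CommRing R]

lemma torsionBySet_le_phiTorsion {Ψ : Set (Ideal R)} {a : Ideal R} (ha : a ∈ Ψ)
    (N : ModuleCat.{0} R) :
    Submodule.torsionBySet R N (a : Set R) ≤ phiTorsion Ψ N :=
  le_iSup₂ (f := fun (a : Ideal R) (_ : a ∈ Ψ) => Submodule.torsionBySet R N (a : Set R)) a ha

lemma mem_phiTorsion_of {Ψ : Set (Ideal R)} {a : Ideal R} (ha : a ∈ Ψ)
    {N : ModuleCat.{0} R} {x : N} (hx : ∀ r ∈ a, r • x = 0) :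
    x ∈ phiTorsion Ψ N := by
  refine torsionBySet_le_phiTorsion ha N ?_
  rw [Submodule.mem_torsionBySet_iff]
  exact fun r => hx r r.2

lemma mem_phiTorsion_iff {Ψ : Set (Ideal R)} (hne : Ψ.Nonempty)
    (hdir : ∀ a ∈ Ψ, ∀ b ∈ Ψ, ∃ c ∈ Ψ, c ≤ a ⊓ b) {N : ModuleCat.{0} R} (x : N) :
    x ∈ phiTorsion Ψ N ↔ ∃ a ∈ Ψ, ∀ r ∈ a, r • x = 0 := by
  constructor
  · intro hx
    have : Nonempty Ψ := hne.to_subtype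
    rw [phiTorsion, iSup_subtype'] at hx
    rw [Submodule.mem_iSup_of_directed] at hx
    · obtain ⟨⟨a, ha⟩, h⟩ := hx
      rw [Submodule.mem_torsionBySet_iff] at h
      exact ⟨a, ha, fun r hr => h ⟨r, hr⟩⟩
    · rintro ⟨a, ha⟩ ⟨b, hb⟩
      obtain ⟨c, hc, hcle⟩ := hdir a ha b hb
      exact ⟨⟨c, hc⟩, Submodule.torsionBySet_le_torsionBySet_of_subset
          (fun r hr => (hcle hr).1),
        Submodule.torsionBySet_le_torsionBySet_of_subset (fun r hr => (hcle hr).2)⟩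
  · rintro ⟨a, ha, h⟩
    exact mem_phiTorsion_of ha h

lemma isSystem_directed {Φ : Set (Ideal R)} (hΦ : Ideal.IsSystem Φ) :
    ∀ a ∈ Φ, ∀ b ∈ Φ, ∃ c ∈ Φ, c ≤ a ⊓ b := by
  intro a ha b hb
  obtain ⟨c, hc, hcle⟩ := hΦ.2 a ha b hb
  exact ⟨c, hc, hcle.trans Ideal.mul_le_inf⟩

lemma pow_directed (a : Ideal R) :
    ∀ b ∈ {I : Ideal R | ∃ n : ℕ, I = a ^ n}, ∀ c ∈ {I : Ideal R | ∃ n : ℕ, I = a ^ n},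
      ∃ d ∈ {I : Ideal R | ∃ n : ℕ, I = a ^ n}, d ≤ b ⊓ c := by
  rintro _ ⟨n, rfl⟩ _ ⟨m, rfl⟩
  exact ⟨a ^ max n m, ⟨max n m, rfl⟩,
    le_inf (Ideal.pow_le_pow_right (le_max_left n m))
      (Ideal.pow_le_pow_right (le_max_right n m))⟩

lemma pow_nonempty (a : Ideal R) : {I : Ideal R | ∃ n : ℕ, I = a ^ n}.Nonempty :=
  ⟨a, 1, (pow_one a).symm⟩

lemma exists_mem_le_pow {Φ : Set (Ideal R)} (hΦ : Ideal.IsSystem Φ) {a : Ideal R}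
    (ha : a ∈ Φ) : ∀ n : ℕ, ∃ c ∈ Φ, c ≤ a ^ n := by
  intro n
  induction n with
  | zero => exact ⟨a, ha, by simpa using le_top⟩
  | succ n ih =>
      obtain ⟨c, hc, hcle⟩ := ih
      obtain ⟨d, hd, hdle⟩ := hΦ.2 a ha c hc
      exact ⟨d, hd, hdle.trans <| le_trans (Ideal.mul_mono le_rfl hcle) (by
        rw [pow_succ, mul_comm])⟩

lemma powTorsion_le_phiTorsion {Φ : Set (Ideal R)} (hΦ : Ideal.IsSystem Φ) {a : Ideal R}
    (ha : a ∈ Φ) (N : ModuleCat.{0} R) :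
    phiTorsion {I : Ideal R | ∃ n : ℕ, I = a ^ n} N ≤ phiTorsion Φ N := by
  refine iSup₂_le ?_
  rintro _ ⟨n, rfl⟩
  obtain ⟨c, hc, hcle⟩ := exists_mem_le_pow hΦ ha n
  exact le_trans (Submodule.torsionBySet_le_torsionBySet_of_subset hcle)
    (torsionBySet_le_phiTorsion hc N)

end Aux

section Glue

variable {R : Type} [CommRing R]

lemma up_next (j : ℕ) : (ComplexShape.up ℕ).next j = j + 1 :=
  CochainComplex.next ℕ j

lemma up_prev (j : ℕ) : (ComplexShape.up ℕ).prev j = j - 1 := by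
  cases j with
  | zero => simpa using CochainComplex.prev_nat_zero
  | succ m => simpa using CochainComplex.prev_nat_succ m

lemma supp_glc_iff {M : ModuleCat.{0} R} (Ψ : Set (Ideal R)) (I : InjectiveResolution M)
    (j : ℕ) (p : PrimeSpectrum R) :
    p ∈ Module.support R ((glc Ψ j).obj M) ↔
      ∃ z : I.cocomplex.X j, z ∈ phiTorsion Ψ (I.cocomplex.X j) ∧
        I.cocomplex.d j (j + 1) z = 0 ∧
        ∀ s ∉ p.asIdeal, ¬ ∃ w ∈ phiTorsion Ψ (I.cocomplex.X (j - 1)),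
          I.cocomplex.d (j - 1) j w = s • z := by
  classical
  set K : CochainComplex (ModuleCat.{0} R) ℕ :=
    ((phiTorsionFunctor Ψ).mapHomologicalComplex (ComplexShape.up ℕ)).obj I.cocomplex with hK
  set S : ShortComplex (ModuleCat.{0} R) := K.sc' (j - 1) j (j + 1) with hS
  have e : ((glc Ψ j).obj M) ≃ₗ[R] (LinearMap.ker S.g.hom ⧸ LinearMap.range S.moduleCatToCycles) :=
    ((I.isoRightDerivedObj (phiTorsionFunctor Ψ) j) ≪≫
      (K.homologyIsoSc' (j - 1) j (j + 1) (up_prev j) (up_next j)) ≪≫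
      S.moduleCatHomologyIso).toLinearEquiv
  rw [show Module.support R ((glc Ψ j).obj M) = Module.support R (LinearMap.ker S.g.hom ⧸ LinearMap.range S.moduleCatToCycles) from
    e.support_eq, Module.mem_support_iff']
  constructor
  · rintro ⟨m, hm⟩
    obtain ⟨k, rfl⟩ := Submodule.Quotient.mk_surjective _ m
    refine ⟨k.1.1, k.1.2, ?_, ?_⟩
    · exact congrArg Subtype.val k.2
    · rintro s hs ⟨w, hw, hdw⟩
      refine hm s hs ?_
      rw [← Submodule.Quotient.mk_smul, Submodule.Quotient.mk_eq_zero]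
      refine ⟨(⟨w, hw⟩ : S.X₁), ?_⟩
      refine Subtype.ext (Subtype.ext ?_)
      exact hdw
  · rintro ⟨z, hzΓ, hz, h3⟩
    refine ⟨Submodule.Quotient.mk ⟨(⟨z, hzΓ⟩ : S.X₂), Subtype.ext hz⟩, ?_⟩
    intro r hr hcon
    rw [← Submodule.Quotient.mk_smul, Submodule.Quotient.mk_eq_zero] at hcon
    obtain ⟨w', hw'⟩ := hcon
    exact h3 r hr ⟨w'.1, w'.2,
      congrArg Subtype.val (congrArg Subtype.val hw')⟩

end Glue

section Key

variable {R : Type} [CommRing R]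

lemma key_lift [IsNoetherianRing R] {M : ModuleCat.{0} R} (I : InjectiveResolution M)
    (Φ : Set (Ideal R)) (p : PrimeSpectrum R) :
    ∀ j : ℕ,
      (∀ j' ≤ j, ∀ y : I.cocomplex.X j', y ∈ phiTorsion Φ (I.cocomplex.X j') →
        I.cocomplex.d j' (j' + 1) y = 0 →
        ∃ s ∉ p.asIdeal, ∃ x ∈ phiTorsion Φ (I.cocomplex.X (j' - 1)),
          I.cocomplex.d (j' - 1) j' x = s • y) →
      ∀ (A : Type) (_ : AddCommGroup A) (_ : Module R A) (_ : Module.Finite R A)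
        (ψ : A →ₗ[R] I.cocomplex.X j),
        (∀ v, ψ v ∈ phiTorsion Φ (I.cocomplex.X j)) →
        (∀ v, I.cocomplex.d j (j + 1) (ψ v) = 0) →
        ∃ u ∉ p.asIdeal, ∃ φ : A →ₗ[R] I.cocomplex.X (j - 1),
          ∀ v, I.cocomplex.d (j - 1) j (φ v) = u • ψ v := by
  intro j
  induction j with
  | zero =>
    intro hyp A _ _ _ ψ hψΓ hψd
    obtain ⟨k, π, hπ⟩ := Module.Finite.exists_fin' R A
    have hsl : ∀ l : Fin k, ∃ s ∉ p.asIdeal, s • ψ (π (Pi.single l 1)) = 0 := by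
      intro l
      obtain ⟨s, hs, x, hxΓ, hx⟩ := hyp 0 le_rfl (ψ (π (Pi.single l 1)))
        (hψΓ _) (hψd _)
      refine ⟨s, hs, ?_⟩
      rw [← hx, I.cocomplex.shape _ _ (by simp [ComplexShape.up_Rel])]
      exact LinearMap.zero_apply x
    choose s hs hsz using hsl
    refine ⟨∏ l, s l, fun hmem => ?_, 0, fun v => ?_⟩
    · exact (Submonoid.prod_mem p.asIdeal.primeCompl (fun l _ => hs l)) hmem
    · have hL : ((∏ l, s l) • (ψ ∘ₗ π)) = 0 := by
        refine Module.Basis.ext (Pi.basisFun R (Fin k)) (fun l => ?_)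
        have : (Pi.basisFun R (Fin k)) l = Pi.single l 1 := by
          simp [Pi.basisFun_apply]
        rw [this]
        have := Finset.prod_erase_mul Finset.univ s (Finset.mem_univ l)
        simp only [LinearMap.smul_apply, LinearMap.comp_apply, LinearMap.zero_apply]
        rw [← this, mul_smul, hsz l, smul_zero]
      obtain ⟨g, rfl⟩ := hπ v
      have := DFunLike.congr_fun hL g
      simp only [LinearMap.smul_apply, LinearMap.comp_apply, LinearMap.zero_apply] at this
      rw [LinearMap.zero_apply, map_zero]
      exact this.symm
  | succ j IH =>
    intro hyp A _ _ _ ψ hψΓ hψd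
    obtain ⟨k, π, hπ⟩ := Module.Finite.exists_fin' R A
    -- apply hypothesis at degree j+1 to the images of the basis
    have hsl : ∀ l : Fin k, ∃ s ∉ p.asIdeal, ∃ x ∈ phiTorsion Φ (I.cocomplex.X j),
        I.cocomplex.d j (j + 1) x = s • ψ (π (Pi.single l 1)) := by
      intro l
      have := hyp (j + 1) le_rfl (ψ (π (Pi.single l 1))) (hψΓ _) (hψd _)
      simpa using this
    choose s hs x hxΓ hx using hsl
    set s' : R := ∏ l, s l with hs'
    have hs'p : s' ∉ p.asIdeal := fun hmem =>
      (Submonoid.prod_mem p.asIdeal.primeCompl (fun l _ => hs l)) hmem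
    set c : Fin k → I.cocomplex.X j :=
      fun l => (∏ l' ∈ Finset.univ.erase l, s l') • x l with hc
    set B := Pi.basisFun R (Fin k) with hB
    set χ : (Fin k → R) →ₗ[R] I.cocomplex.X j := B.constr ℕ c with hχ
    have hχbasis : ∀ l, χ (Pi.single l 1) = c l := by
      intro l
      have : (B l : Fin k → R) = Pi.single l 1 := by simp [hB, Pi.basisFun_apply]
      rw [← this, hχ, Module.Basis.constr_basis]
    have hχΓ : ∀ g, χ g ∈ phiTorsion Φ (I.cocomplex.X j) := by
      intro g
      have hrange : LinearMap.range χ ≤ phiTorsion Φ (I.cocomplex.X j) := by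
        rw [hχ, Module.Basis.constr_range]
        refine Submodule.span_le.mpr ?_
        rintro _ ⟨l, rfl⟩
        exact Submodule.smul_mem _ _ (hxΓ l)
      exact hrange ⟨g, rfl⟩
    have hkey : ∀ g, I.cocomplex.d j (j + 1) (χ g) = s' • ψ (π g) := by
      have : (I.cocomplex.d j (j + 1)).hom.comp χ
          = s' • (ψ ∘ₗ π) := by
        refine Module.Basis.ext B (fun l => ?_)
        have hBl : (B l : Fin k → R) = Pi.single l 1 := by simp [hB, Pi.basisFun_apply]
        simp only [LinearMap.comp_apply, LinearMap.smul_apply]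
        rw [hBl, hχbasis l, hc]
        simp only [map_smul]
        rw [hx l, smul_smul, Finset.prod_erase_mul Finset.univ s (Finset.mem_univ l)]
      intro g
      exact DFunLike.congr_fun this g
    -- the relations submodule
    set S₀ : Submodule R (Fin k → R) := LinearMap.ker π with hS₀
    haveI : Module.Finite R ↥S₀ :=
      Module.Finite.iff_fg.mpr (IsNoetherian.noetherian S₀)
    have hIH := IH (fun j' hj' => hyp j' (hj'.trans (Nat.le_succ j))) ↥S₀ inferInstance
      inferInstance inferInstance (χ ∘ₗ S₀.subtype)
      (fun q => hχΓ _) (fun q => by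
        rw [LinearMap.comp_apply, hkey]
        have : π (S₀.subtype q) = 0 := q.2
        rw [this, map_zero, smul_zero])
    obtain ⟨u', hu', φ', hφ'⟩ := hIH
    -- extend φ' along S₀ ↪ (Fin k → R) using injectivity
    haveI : Mono (ModuleCat.ofHom S₀.subtype) :=
      (ModuleCat.mono_iff_injective _).mpr (Submodule.injective_subtype S₀)
    set φ'' : ModuleCat.of R (Fin k → R) ⟶ I.cocomplex.X (j - 1) :=
      Injective.factorThru (show ModuleCat.of R ↥S₀ ⟶ I.cocomplex.X (j - 1) from ModuleCat.ofHom φ')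
        (ModuleCat.ofHom S₀.subtype) with hφ''
    have hext : ∀ q : ↥S₀, φ'' (S₀.subtype q) = φ' q := by
      intro q
      exact ConcreteCategory.congr_hom
        (Injective.comp_factorThru (show ModuleCat.of R ↥S₀ ⟶ I.cocomplex.X (j - 1) from ModuleCat.ofHom φ')
          (ModuleCat.ofHom S₀.subtype)) q
    set φ''' : (Fin k → R) →ₗ[R] I.cocomplex.X (j - 1) := φ''.hom with hφ'''
    -- θ kills S₀, descends to A
    set θ : (Fin k → R) →ₗ[R] I.cocomplex.X j :=
      u' • χ - (I.cocomplex.d (j - 1) j).hom.comp φ''' with hθ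
    have hθS₀ : S₀ ≤ LinearMap.ker θ := by
      intro q hq
      have h1 : φ''' q = φ' ⟨q, hq⟩ := hext ⟨q, hq⟩
      have h2 : I.cocomplex.d (j - 1) j (φ' ⟨q, hq⟩) = u' • χ q := by
        have := hφ' ⟨q, hq⟩
        simpa using this
      rw [LinearMap.mem_ker, hθ]
      simp only [LinearMap.sub_apply, LinearMap.smul_apply, LinearMap.comp_apply]
      rw [h1, h2, sub_self]
    set e := π.quotKerEquivOfSurjective hπ with he
    set φ₀ : A →ₗ[R] I.cocomplex.X j := (S₀.liftQ θ hθS₀) ∘ₗ (e.symm : A →ₗ[R] _) with hφ₀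
    have hfact : ∀ g : Fin k → R, φ₀ (π g) = θ g := by
      intro g
      have hsymm : e.symm (π g) = Submodule.Quotient.mk g := by
        rw [LinearEquiv.symm_apply_eq]
        rfl
      rw [hφ₀, LinearMap.comp_apply, LinearEquiv.coe_coe, hsymm, Submodule.liftQ_apply]
    refine ⟨u' * s', fun hmem => ?_, φ₀, fun v => ?_⟩
    · exact (Submonoid.mul_mem p.asIdeal.primeCompl hu' hs'p) hmem
    · obtain ⟨g, rfl⟩ := hπ v
      show I.cocomplex.d j (j + 1) (φ₀ (π g)) = (u' * s') • ψ (π g)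
      rw [hfact g, hθ]
      simp only [LinearMap.sub_apply, LinearMap.smul_apply, LinearMap.comp_apply]
      rw [map_sub, map_smul, hkey g]
      have hdd : I.cocomplex.d j (j + 1) (I.cocomplex.d (j - 1) j (φ''' g)) = 0 := by
        have := I.cocomplex.d_comp_d (j - 1) j (j + 1)
        exact ConcreteCategory.congr_hom this (φ''' g)
      rw [hdd, sub_zero, smul_smul]

end Key

section Hard

variable {R : Type} [CommRing R]

lemma key_hard [IsNoetherianRing R] {M : ModuleCat.{0} R} (I : InjectiveResolution M)
    {Φ : Set (Ideal R)} (hΦ : Ideal.IsSystem Φ) {a : Ideal R} (ha : a ∈ Φ)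
    (p : PrimeSpectrum R) (i : ℕ)
    (hyp : ∀ j' ≤ i, ∀ y : I.cocomplex.X j', y ∈ phiTorsion Φ (I.cocomplex.X j') →
        I.cocomplex.d j' (j' + 1) y = 0 →
        ∃ s ∉ p.asIdeal, ∃ x ∈ phiTorsion Φ (I.cocomplex.X (j' - 1)),
          I.cocomplex.d (j' - 1) j' x = s • y)
    (z : I.cocomplex.X i)
    (hzΓ : z ∈ phiTorsion {J : Ideal R | ∃ n : ℕ, J = a ^ n} (I.cocomplex.X i))
    (hz : I.cocomplex.d i (i + 1) z = 0) :
    ∃ u ∉ p.asIdeal, ∃ w ∈ phiTorsion {J : Ideal R | ∃ n : ℕ, J = a ^ n}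
      (I.cocomplex.X (i - 1)), I.cocomplex.d (i - 1) i w = u • z := by
  obtain ⟨b, hb, hbz⟩ := (mem_phiTorsion_iff (pow_nonempty a) (pow_directed a) z).mp hzΓ
  obtain ⟨n, rfl⟩ := hb
  have hzΦ : z ∈ phiTorsion Φ (I.cocomplex.X i) := powTorsion_le_phiTorsion hΦ ha _ hzΓ
  obtain ⟨s, hs, w₀, hw₀Γ, hw₀⟩ := hyp i le_rfl z hzΦ hz
  cases i with
  | zero =>
    refine ⟨s, hs, 0, Submodule.zero_mem _, ?_⟩
    rw [map_zero, ← hw₀, I.cocomplex.shape _ _ (by simp [ComplexShape.up_Rel])]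
    exact (LinearMap.zero_apply w₀).symm
  | succ m =>
    haveI : Module.Finite R ↥(a ^ n) :=
      Module.Finite.iff_fg.mpr (IsNoetherian.noetherian (a ^ n : Ideal R))
    set ψ : ↥(a ^ n) →ₗ[R] I.cocomplex.X m :=
      LinearMap.smulRight ((a ^ n : Ideal R)).subtype w₀ with hψ
    have hψapp : ∀ v : ↥(a ^ n), ψ v = (v : R) • w₀ := fun v => rfl
    have hψΓ : ∀ v, ψ v ∈ phiTorsion Φ (I.cocomplex.X m) := fun v =>
      Submodule.smul_mem _ _ hw₀Γ
    have hψd : ∀ v, I.cocomplex.d m (m + 1) (ψ v) = 0 := by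
      intro v
      rw [hψapp, map_smul]
      have : I.cocomplex.d (m + 1 - 1) (m + 1) w₀ = s • z := hw₀
      rw [show I.cocomplex.d m (m + 1) w₀ = s • z from this, smul_comm]
      rw [hbz (v : R) v.2, smul_zero]
    obtain ⟨u', hu', φ, hφ⟩ := key_lift I Φ p m
      (fun j' hj' => hyp j' (hj'.trans (Nat.le_succ m))) ↥(a ^ n)
      inferInstance inferInstance inferInstance ψ hψΓ hψd
    haveI : Mono (ModuleCat.ofHom ((a ^ n : Ideal R)).subtype) :=
      (ModuleCat.mono_iff_injective _).mpr (Submodule.injective_subtype _)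
    set Φ₀ : ModuleCat.of R R ⟶ I.cocomplex.X (m - 1) :=
      Injective.factorThru (show ModuleCat.of R ↥(a ^ n) ⟶ I.cocomplex.X (m - 1) from ModuleCat.ofHom φ)
        (ModuleCat.ofHom ((a ^ n : Ideal R)).subtype) with hΦ₀def
    have hΦ₀ : ∀ v : ↥(a ^ n), Φ₀ ((v : R)) = φ v := by
      intro v
      exact ConcreteCategory.congr_hom
        (Injective.comp_factorThru (show ModuleCat.of R ↥(a ^ n) ⟶ I.cocomplex.X (m - 1) from ModuleCat.ofHom φ)
          (ModuleCat.ofHom ((a ^ n : Ideal R)).subtype)) v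
    set Φ₀' : R →ₗ[R] I.cocomplex.X (m - 1) := Φ₀.hom with hΦ₀'
    set c₀ : I.cocomplex.X (m - 1) := Φ₀' 1 with hc₀
    set w : ↑(I.cocomplex.X m) :=
      u' • (show ↑(I.cocomplex.X m) from w₀) - I.cocomplex.d (m - 1) m c₀ with hw
    have hwt : ∀ r ∈ (a ^ n : Ideal R), r • w = 0 := by
      intro r hr
      rw [hw, smul_sub, smul_comm, ← map_smul]
      have h1 : r • c₀ = Φ₀' r := by
        rw [hc₀, ← map_smul, smul_eq_mul, mul_one]
      have h2 : Φ₀' r = φ ⟨r, hr⟩ := hΦ₀ ⟨r, hr⟩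
      rw [h1, h2, hφ ⟨r, hr⟩, hψapp]
      show u' • r • w₀ - u' • (r • w₀) = 0
      rw [sub_self]
    refine ⟨u' * s, fun hmem => (Submonoid.mul_mem p.asIdeal.primeCompl hu' hs) hmem,
      w, mem_phiTorsion_of (show (a ^ n : Ideal R) ∈ {J : Ideal R | ∃ k : ℕ, J = a ^ k} from ⟨n, rfl⟩) hwt, ?_⟩
    show I.cocomplex.d m (m + 1) w = (u' * s) • z
    rw [hw, map_sub, map_smul]
    have hdd : I.cocomplex.d m (m + 1) (I.cocomplex.d (m - 1) m c₀) = 0 := by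
      have := I.cocomplex.d_comp_d (m - 1) m (m + 1)
      exact ConcreteCategory.congr_hom this c₀
    have : I.cocomplex.d (m + 1 - 1) (m + 1) w₀ = s • z := hw₀
    rw [hdd, sub_zero, show I.cocomplex.d m (m + 1) w₀ = s • z from this, smul_smul]

end Hard

/-- **Corollary 3.9.** `⋃_{i<t} Supp H^i_Φ(M) = ⋃_{a∈Φ, i<t} Supp H^i_a(M)`. -/
theorem stmt17 (R : Type) [CommRing R] [IsNoetherianRing R]
    (Φ : Set (Ideal R)) (hΦ : Ideal.IsSystem Φ)
    (M : ModuleCat.{0} R) (t : ℕ) :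
    (⋃ i ∈ Set.Iio t, Module.support R ((glc Φ i).obj M)) =
      ⋃ a ∈ Φ, ⋃ i ∈ Set.Iio t, Module.support R ((olc a i).obj M) := by
  obtain ⟨IR⟩ := (HasInjectiveResolution.out (Z := M))
  ext p
  simp only [Set.mem_iUnion, Set.mem_Iio, exists_prop]
  constructor
  · rintro ⟨i, hit, hp⟩
    obtain ⟨z, hzΓ, hz, h3⟩ := (supp_glc_iff Φ IR i p).mp hp
    obtain ⟨b, hb, hbz⟩ := (mem_phiTorsion_iff hΦ.1 (isSystem_directed hΦ) z).mp hzΓ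
    refine ⟨b, hb, i, hit, ?_⟩
    refine (supp_glc_iff {I : Ideal R | ∃ n : ℕ, I = b ^ n} IR i p).mpr ⟨z, ?_, hz, ?_⟩
    · exact mem_phiTorsion_of
        (show b ∈ {I : Ideal R | ∃ n : ℕ, I = b ^ n} from ⟨1, (pow_one b).symm⟩) hbz
    · rintro s hs ⟨w, hwΓ, hdw⟩
      exact h3 s hs ⟨w, powTorsion_le_phiTorsion hΦ hb _ hwΓ, hdw⟩
  · rintro ⟨a, ha, i, hit, hp⟩
    by_contra hnot
    push_neg at hnot
    have hyp : ∀ j' ≤ i, ∀ y : IR.cocomplex.X j', y ∈ phiTorsion Φ (IR.cocomplex.X j') →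
        IR.cocomplex.d j' (j' + 1) y = 0 →
        ∃ s ∉ p.asIdeal, ∃ x ∈ phiTorsion Φ (IR.cocomplex.X (j' - 1)),
          IR.cocomplex.d (j' - 1) j' x = s • y := by
      intro j' hj' y hyΓ hyd
      have hmem := hnot j' (lt_of_le_of_lt hj' hit)
      rw [supp_glc_iff Φ IR j' p] at hmem
      push_neg at hmem
      obtain ⟨s, hs, hws⟩ := hmem y hyΓ hyd
      exact ⟨s, hs, hws⟩
    obtain ⟨z, hzΓ, hz, h3⟩ :=
      (supp_glc_iff {I : Ideal R | ∃ n : ℕ, I = a ^ n} IR i p).mp hp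
    obtain ⟨u, hu, w, hwΓ, hdw⟩ := key_hard IR hΦ ha p i hyp z hzΓ hz
    exact h3 u hu ⟨w, hwΓ, hdw⟩

end
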